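/- Let R be a commutative ring and let f = f₁ + α·f₂ and g = g₁ + α·g₂ be polynomials over the ring of dual numbers R[α], with f₁, f₂, g₁, g₂ ∈ R[x]. Then f and g induce the same function on R[α] if and only if the following three conditions hold: (1) f₁ and g₁ induce the same function on R; (2) the formal derivatives f₁′ and g₁′ induce the same function on R; (3) f₂ and g₂ induce the same function on R. -/
import Mathlib


open Polynomial TrivSqZeroExt


lemma fst_aeval_dual {R : Type*} [CommRing R] (z : DualNumber R) (p : R[X]) :
    (aeval z p).fst = eval z.fst p := by
  induction p using Polynomial.induction_on' with
  | add p q hp hq => simp [hp, hq]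
  | monomial n a => simp [aeval_monomial, TrivSqZeroExt.algebraMap_eq_inl']

lemma snd_aeval_dual {R : Type*} [CommRing R] (z : DualNumber R) (p : R[X]) :
    (aeval z p).snd = z.snd * eval z.fst (derivative p) := by
  induction p using Polynomial.induction_on' with
  | add p q hp hq => simp [hp, hq]; ring
  | monomial n a =>
    simp [aeval_monomial, derivative_monomial, snd_mul, snd_pow, smul_eq_mul, TrivSqZeroExt.algebraMap_eq_inl']
    ring


/-- **Corollary (equality of induced functions on R[α]).**
Let `R` be a commutative ring and `f = f₁ + α·f₂`, `g = g₁ + α·g₂` polynomials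
over the dual numbers `R[α]`.  Then `f` and `g` induce the same function on
`R[α]` iff (1) `f₁` and `g₁` induce the same function on `R`, (2) `f₁'` and
`g₁'` induce the same function on `R`, and (3) `f₂` and `g₂` induce the same
function on `R`. -/
theorem same_fun_dualNumber_iff (R : Type*) [CommRing R] (f₁ f₂ g₁ g₂ : R[X]) :
    (∀ z : DualNumber R,
        aeval z f₁ + DualNumber.eps * aeval z f₂ =
          aeval z g₁ + DualNumber.eps * aeval z g₂) ↔
      (∀ a : R, eval a f₁ = eval a g₁) ∧
        (∀ a : R, eval a (derivative f₁) = eval a (derivative g₁)) ∧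
          (∀ a : R, eval a f₂ = eval a g₂) := by
  have hfst : ∀ z : DualNumber R, ∀ p q : R[X],
      (aeval z p + DualNumber.eps * aeval z q).fst = eval z.fst p := by
    intro z p q
    simp [fst_aeval_dual, fst_mul]
  have hsnd : ∀ z : DualNumber R, ∀ p q : R[X],
      (aeval z p + DualNumber.eps * aeval z q).snd
        = z.snd * eval z.fst (derivative p) + eval z.fst q := by
    intro z p q
    simp [snd_aeval_dual, fst_aeval_dual, snd_mul, smul_eq_mul]
  constructor
  · intro h
    refine ⟨fun a => ?_, fun a => ?_, fun a => ?_⟩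
    · have := congrArg TrivSqZeroExt.fst (h (TrivSqZeroExt.inl a))
      simpa [hfst] using this
    · have h0 := congrArg TrivSqZeroExt.snd (h (TrivSqZeroExt.inl a))
      have h1 := congrArg TrivSqZeroExt.snd (h (TrivSqZeroExt.inl a + DualNumber.eps))
      simp [hsnd] at h0 h1
      linear_combination h1 - h0
    · have h0 := congrArg TrivSqZeroExt.snd (h (TrivSqZeroExt.inl a))
      simpa [hsnd] using h0
  · rintro ⟨h1, h2, h3⟩ z
    ext
    · simp [hfst, h1]
    · simp [hsnd, h2, h3]
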